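/- Let (x,y) be a cherry of a binary phylogenetic X-tree T and let δ be a dissimilarity map on X quartet consistent with T. Define the reduced map δ' on X' = (X \ {x,y}) ∪ {z} by δ'(z,a) = (1/2)(δ(x,a) + δ(y,a)) for a ∈ X \ {x,y} and δ'(a,b) = δ(a,b) otherwise. Let T' be the tree obtained from T by deleting the leaves x, y and labeling their former parent by z. Then δ' is quartet consistent with T'. -/

import Mathlib

open Finset
open scoped Classical

/-- `w_δ(ij:kl) = (1/2)(δ(i,k)+δ(i,l)+δ(j,k)+δ(j,l)) - δ(i,j) - δ(k,l)`. -/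
noncomputable def njw {X : Type*} (δ : X → X → ℝ) (i j k l : X) : ℝ :=
  (δ i k + δ i l + δ j k + δ j l) / 2 - δ i j - δ k l

/-- Edge `e` (with split side `σ e`) separates the pair `p,q` from the pair `r,s`. -/
def sepE {X E : Type*} (σ : E → Finset X) (e : E) (p q r s : X) : Prop :=
  (p ∈ σ e ∧ q ∈ σ e ∧ r ∉ σ e ∧ s ∉ σ e) ∨
  (p ∉ σ e ∧ q ∉ σ e ∧ r ∈ σ e ∧ s ∈ σ e)

/-- `(ij:kl)` is a quartet of the tree encoded by the split system `σ`:
some internal edge separates `{i,j}` from `{k,l}`. -/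
def isQuartet {X E : Type*} (σ : E → Finset X) (i j k l : X) : Prop :=
  ∃ e, sepE σ e i j k l

/-- Pairwise compatibility of the splits: the condition under which a split system
is exactly the split system of a (phylogenetic) tree. -/
def splitsCompatible {X E : Type*} [Fintype X] (σ : E → Finset X) : Prop :=
  ∀ e f, σ e ⊆ σ f ∨ σ f ⊆ σ e ∨ (∀ a, a ∈ σ e → a ∉ σ f) ∨ (∀ a, a ∈ σ e ∨ a ∈ σ f)

/-- A dissimilarity map `δ` is quartet consistent with the tree encoded by `σ`. -/
def quartetConsistent {X E : Type*} (σ : E → Finset X) (δ : X → X → ℝ) : Prop :=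
  ∀ i j k l : X, i ≠ j → i ≠ k → i ≠ l → j ≠ k → j ≠ l → k ≠ l →
    isQuartet σ i j k l →
      njw δ i j k l > max (njw δ i k j l) (njw δ i l j k)

/-- The scaled Z-criterion `Z_δ(i,j) = ∑_{{k,l} ⊆ X\{i,j}} w_δ(ij:kl)`
(sum over unordered pairs, written as half the sum over ordered pairs). -/
noncomputable def njZ {X : Type*} [Fintype X] [DecidableEq X]
    (δ : X → X → ℝ) (i j : X) : ℝ :=
  (1 / 2) * ∑ k ∈ (Finset.univ.erase i).erase j,
    ∑ l ∈ ((Finset.univ.erase i).erase j).erase k, njw δ i j k l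

/-- `(x,y)` is a cherry of the tree encoded by `σ`: some edge induces the split
`{x,y} | X \ {x,y}`. -/
def isCherry {X E : Type*} [Fintype X] [DecidableEq X]
    (σ : E → Finset X) (x y : X) : Prop :=
  x ≠ y ∧ ∃ e, σ e = {x, y} ∨ σ e = ({x, y} : Finset X)ᶜ


lemma njw_comm12 {X : Type*} (δ : X → X → ℝ) (hs : ∀ a b, δ a b = δ b a)
    (i j k l : X) : njw δ i j k l = njw δ j i k l := by
  unfold njw; rw [hs i j]; ring

lemma njw_comm34 {X : Type*} (δ : X → X → ℝ) (hs : ∀ a b, δ a b = δ b a)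
    (i j k l : X) : njw δ i j k l = njw δ i j l k := by
  unfold njw; rw [hs k l]; ring

lemma njw_pair {X : Type*} (δ : X → X → ℝ) (hs : ∀ a b, δ a b = δ b a)
    (i j k l : X) : njw δ i j k l = njw δ k l i j := by
  unfold njw; rw [hs i k, hs i l, hs j k, hs j l]; ring

set_option maxHeartbeats 1000000 in
lemma cherry_sep {X E : Type*} [Fintype X] [DecidableEq X]
    (σ : E → Finset X) (hcompat : splitsCompatible σ)
    (x y : X) (hxy : x ≠ y) (f : E)
    (hf : σ f = {x, y} ∨ σ f = ({x, y} : Finset X)ᶜ)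
    (e : E) (j k l : X)
    (hj : j ≠ x) (hj' : j ≠ y) (hk : k ≠ x) (hk' : k ≠ y)
    (hl : l ≠ x) (hl' : l ≠ y)
    (h : sepE σ e x j k l) : sepE σ e y j k l := by
  rcases hf with hf | hf
  · have mx : x ∈ σ f := by rw [hf]; simp
    have my : y ∈ σ f := by rw [hf]; simp
    have mj : j ∉ σ f := by rw [hf]; simp [hj, hj']
    have mk : k ∉ σ f := by rw [hf]; simp [hk, hk']
    have ml : l ∉ σ f := by rw [hf]; simp [hl, hl']
    rcases hcompat e f with hc | hc | hc | hc
    · have hc' : ∀ a, a ∈ σ e → a ∈ σ f := fun a ha => hc ha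
      have h1 := hc' x; have h2 := hc' y; have h3 := hc' j
      have h4 := hc' k; have h5 := hc' l
      unfold sepE at h ⊢; tauto
    · have hc' : ∀ a, a ∈ σ f → a ∈ σ e := fun a ha => hc ha
      have h1 := hc' x; have h2 := hc' y; have h3 := hc' j
      have h4 := hc' k; have h5 := hc' l
      unfold sepE at h ⊢; tauto
    · have h1 := hc x; have h2 := hc y; have h3 := hc j
      have h4 := hc k; have h5 := hc l
      unfold sepE at h ⊢; tauto
    · have h1 := hc x; have h2 := hc y; have h3 := hc j
      have h4 := hc k; have h5 := hc l
      unfold sepE at h ⊢; tauto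
  · have mx : x ∉ σ f := by rw [hf]; simp
    have my : y ∉ σ f := by rw [hf]; simp
    have mj : j ∈ σ f := by rw [hf]; simp [hj, hj']
    have mk : k ∈ σ f := by rw [hf]; simp [hk, hk']
    have ml : l ∈ σ f := by rw [hf]; simp [hl, hl']
    rcases hcompat e f with hc | hc | hc | hc
    · have hc' : ∀ a, a ∈ σ e → a ∈ σ f := fun a ha => hc ha
      have h1 := hc' x; have h2 := hc' y; have h3 := hc' j
      have h4 := hc' k; have h5 := hc' l
      unfold sepE at h ⊢; tauto
    · have hc' : ∀ a, a ∈ σ f → a ∈ σ e := fun a ha => hc ha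
      have h1 := hc' x; have h2 := hc' y; have h3 := hc' j
      have h4 := hc' k; have h5 := hc' l
      unfold sepE at h ⊢; tauto
    · have h1 := hc x; have h2 := hc y; have h3 := hc j
      have h4 := hc k; have h5 := hc l
      unfold sepE at h ⊢; tauto
    · have h1 := hc x; have h2 := hc y; have h3 := hc j
      have h4 := hc k; have h5 := hc l
      unfold sepE at h ⊢; tauto

/-- reducing a cherry `(x,y)` preserves quartet consistency. The reduced
map `δ'` on `X' = (X \ {x,y}) ∪ {z}` is realized on `X \ {y}` by letting the label `x`
stand for the new taxon `z` (placed at the former parent of the cherry): thus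
`δ'(z,a) = (δ(x,a)+δ(y,a))/2` and `δ'` agrees with `δ` elsewhere. The reduced tree `T'`
induces on `X \ {y}` exactly the quartets of `T` (with `z` in the position of `x`), so
quartet consistency of `δ'` with `T'` reads as below. -/
theorem statement_11 {X E : Type*} [Fintype X] [DecidableEq X]
    (σ : E → Finset X)
    (hcompat : splitsCompatible σ)
    (hnontriv : ∀ e, (σ e).Nonempty ∧ σ e ≠ Finset.univ)
    (δ : X → X → ℝ)
    (hsym : ∀ x y, δ x y = δ y x) (hdiag : ∀ x, δ x x = 0)
    (hqc : quartetConsistent σ δ)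
    (x y : X) (hcherry : isCherry σ x y)
    (δ' : X → X → ℝ)
    (hsym' : ∀ p q, δ' p q = δ' q p) (hdiag' : ∀ p, δ' p p = 0)
    (hred : ∀ a : X, a ≠ x → a ≠ y → δ' x a = (δ x a + δ y a) / 2)
    (hrest : ∀ a b : X, a ≠ x → a ≠ y → b ≠ x → b ≠ y → δ' a b = δ a b) :
    ∀ i j k l : X, i ≠ y → j ≠ y → k ≠ y → l ≠ y →
      i ≠ j → i ≠ k → i ≠ l → j ≠ k → j ≠ l → k ≠ l →
      isQuartet σ i j k l →
        njw δ' i j k l > max (njw δ' i k j l) (njw δ' i l j k) := by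
  intro i j k l hiy hjy hky hly hij hik hil hjk hjl hkl hq
  obtain ⟨hxy, f, hf⟩ := hcherry
  have key : ∀ a b c : X, a ≠ x → a ≠ y → b ≠ x → b ≠ y → c ≠ x → c ≠ y →
      a ≠ b → a ≠ c → b ≠ c → isQuartet σ x a b c →
      njw δ' x a b c > max (njw δ' x b a c) (njw δ' x c a b) := by
    intro a b c hax hay hbx hby hcx hcy hab hac hbc hqx
    obtain ⟨e, he⟩ := hqx
    have hqy : isQuartet σ y a b c :=
      ⟨e, cherry_sep σ hcompat x y hxy f hf e a b c hax hay hbx hby hcx hcy he⟩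
    have h1 := hqc x a b c (Ne.symm hax) (Ne.symm hbx) (Ne.symm hcx) hab hac hbc ⟨e, he⟩
    have h2 := hqc y a b c (Ne.symm hay) (Ne.symm hby) (Ne.symm hcy) hab hac hbc hqy
    have e1 : njw δ' x a b c = (njw δ x a b c + njw δ y a b c) / 2 := by
      unfold njw
      rw [hred a hax hay, hred b hbx hby, hred c hcx hcy,
        hrest a b hax hay hbx hby, hrest a c hax hay hcx hcy,
        hrest b c hbx hby hcx hcy]
      ring
    have e2 : njw δ' x b a c = (njw δ x b a c + njw δ y b a c) / 2 := by
      unfold njw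
      rw [hred a hax hay, hred b hbx hby, hred c hcx hcy,
        hrest b a hbx hby hax hay, hrest b c hbx hby hcx hcy,
        hrest a c hax hay hcx hcy]
      ring
    have e3 : njw δ' x c a b = (njw δ x c a b + njw δ y c a b) / 2 := by
      unfold njw
      rw [hred a hax hay, hred b hbx hby, hred c hcx hcy,
        hrest c a hcx hcy hax hay, hrest c b hcx hcy hbx hby,
        hrest a b hax hay hbx hby]
      ring
    have b1 : njw δ x b a c < njw δ x a b c := lt_of_le_of_lt (le_max_left _ _) h1
    have c1 : njw δ x c a b < njw δ x a b c := lt_of_le_of_lt (le_max_right _ _) h1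
    have b2 : njw δ y b a c < njw δ y a b c := lt_of_le_of_lt (le_max_left _ _) h2
    have c2 : njw δ y c a b < njw δ y a b c := lt_of_le_of_lt (le_max_right _ _) h2
    rw [e1, e2, e3, gt_iff_lt, max_lt_iff]
    constructor <;> linarith
  by_cases hix : i = x
  · subst hix
    exact key j k l (Ne.symm hij) hjy (Ne.symm hik) hky (Ne.symm hil) hly hjk hjl hkl hq
  · by_cases hjx : j = x
    · subst hjx
      obtain ⟨e, he⟩ := hq
      have hq' : isQuartet σ j i k l := ⟨e, by unfold sepE at he ⊢; tauto⟩
      have hkey := key i k l hix hiy (Ne.symm hjk) hky (Ne.symm hjl) hly hik hil hkl hq'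
      have g1 : njw δ' i j k l = njw δ' j i k l := njw_comm12 δ' hsym' i j k l
      have g2 : njw δ' i k j l = njw δ' j l i k := njw_pair δ' hsym' i k j l
      have g3 : njw δ' i l j k = njw δ' j k i l := njw_pair δ' hsym' i l j k
      rw [g1, g2, g3, max_comm]
      exact hkey
    · by_cases hkx : k = x
      · subst hkx
        obtain ⟨e, he⟩ := hq
        have hq' : isQuartet σ k l i j := ⟨e, by unfold sepE at he ⊢; tauto⟩
        have hkey := key l i j (Ne.symm hkl) hly hik hiy hjk hjy (Ne.symm hil) (Ne.symm hjl) hij hq'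
        have g1 : njw δ' i j k l = njw δ' k l i j := njw_pair δ' hsym' i j k l
        have g2 : njw δ' i k j l = njw δ' k i l j := by
          rw [njw_comm12 δ' hsym' i k j l, njw_comm34 δ' hsym' k i j l]
        have g3 : njw δ' i l j k = njw δ' k j l i := by
          rw [njw_pair δ' hsym' i l j k, njw_comm12 δ' hsym' j k i l,
            njw_comm34 δ' hsym' k j i l]
        rw [g1, g2, g3]
        exact hkey
      · by_cases hlx : l = x
        · subst hlx
          obtain ⟨e, he⟩ := hq
          have hq' : isQuartet σ l k i j := ⟨e, by unfold sepE at he ⊢; tauto⟩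
          have hkey := key k i j hkl hky hil hiy hjl hjy (Ne.symm hik) (Ne.symm hjk) hij hq'
          have g1 : njw δ' i j k l = njw δ' l k i j := by
            rw [njw_pair δ' hsym' i j k l, njw_comm12 δ' hsym' k l i j]
          have g2 : njw δ' i k j l = njw δ' l j k i := by
            rw [njw_pair δ' hsym' i k j l, njw_comm12 δ' hsym' j l i k,
              njw_comm34 δ' hsym' l j i k]
          have g3 : njw δ' i l j k = njw δ' l i k j := by
            rw [njw_comm12 δ' hsym' i l j k, njw_comm34 δ' hsym' l i j k]
          rw [g1, g2, g3, max_comm]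
          exact hkey
        · have g1 : njw δ' i j k l = njw δ i j k l := by
            unfold njw
            rw [hrest i k hix hiy hkx hky, hrest i l hix hiy hlx hly,
              hrest j k hjx hjy hkx hky, hrest j l hjx hjy hlx hly,
              hrest i j hix hiy hjx hjy, hrest k l hkx hky hlx hly]
          have g2 : njw δ' i k j l = njw δ i k j l := by
            unfold njw
            rw [hrest i j hix hiy hjx hjy, hrest i l hix hiy hlx hly,
              hrest k j hkx hky hjx hjy, hrest k l hkx hky hlx hly,
              hrest i k hix hiy hkx hky, hrest j l hjx hjy hlx hly]
          have g3 : njw δ' i l j k = njw δ i l j k := by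
            unfold njw
            rw [hrest i j hix hiy hjx hjy, hrest i k hix hiy hkx hky,
              hrest l j hlx hly hjx hjy, hrest l k hlx hly hkx hky,
              hrest i l hix hiy hlx hly, hrest j k hjx hjy hkx hky]
          rw [g1, g2, g3]
          exact hqc i j k l hij hik hil hjk hjl hkl hq
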